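/- arXiv:1909.03112 — 3 statements merged into one kernel-verified Lean document; each statement's English description precedes it below -/
import Mathlib

section
/- Let f be differentiable on an open interval containing [a,b] with f' strictly decreasing. Suppose x₀, x₁, ..., x_{n+1} are points in [a,b] (not assumed ordered) with x₀ = a, x_{n+1} = b, such that for every i = 1, ..., n, f'(x_i) · (x_{i+1} - x_{i-1}) = f(x_{i+1}) - f(x_{i-1}) and x_{i-1} ≠ x_{i+1}. Then the sequence is strictly increasing: x_{i-1} < x_i < x_{i+1} for all i = 1, ..., n. -/
theorem stmt_4 (f : ℝ → ℝ) (s : Set ℝ) (a b : ℝ) (hs : IsOpen s)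
    (hsub : Set.Icc a b ⊆ s) (hd : DifferentiableOn ℝ f s)
    (hanti : StrictAntiOn (deriv f) s)
    (n : ℕ) (x : ℕ → ℝ)
    (hmem : ∀ i ≤ n + 1, x i ∈ Set.Icc a b)
    (h0 : x 0 = a) (hlast : x (n + 1) = b)
    (hstat : ∀ i, 1 ≤ i → i ≤ n →
      deriv f (x i) * (x (i + 1) - x (i - 1)) = f (x (i + 1)) - f (x (i - 1)))
    (hne : ∀ i, 1 ≤ i → i ≤ n → x (i - 1) ≠ x (i + 1)) :
    ∀ i, 1 ≤ i → i ≤ n → x (i - 1) < x i ∧ x i < x (i + 1) := by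
  rcases Nat.eq_zero_or_pos n with hn0 | hn1
  · intro i h1 h2; omega
  -- key betweenness lemma
  have key : ∀ i, 1 ≤ i → i ≤ n →
      (x (i - 1) < x i ∧ x i < x (i + 1)) ∨ (x (i + 1) < x i ∧ x i < x (i - 1)) := by
    intro i h1 h2
    have hpm : x (i - 1) ∈ Set.Icc a b := hmem (i - 1) (by omega)
    have hqm : x (i + 1) ∈ Set.Icc a b := hmem (i + 1) (by omega)
    have hxm : x i ∈ Set.Icc a b := hmem i (by omega)
    have hstati := hstat i h1 h2
    rcases (hne i h1 h2).lt_or_gt with h | h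
    · -- x (i-1) < x (i+1)
      have hsub1 : Set.Icc (x (i - 1)) (x (i + 1)) ⊆ s := fun y hy =>
        hsub ⟨le_trans hpm.1 hy.1, le_trans hy.2 hqm.2⟩
      obtain ⟨c, hc, hceq⟩ := exists_deriv_eq_slope f h
        (hd.continuousOn.mono hsub1)
        (hd.mono (subset_trans Set.Ioo_subset_Icc_self hsub1))
      have hne' : x (i + 1) - x (i - 1) ≠ 0 := sub_ne_zero.mpr (hne i h1 h2).symm
      have hderiv : deriv f (x i) = deriv f c := by
        rw [hceq]; field_simp; linarith [hstati]
      have hcs : c ∈ s := hsub1 (Set.Ioo_subset_Icc_self hc)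
      have hxeq : x i = c := hanti.injOn (hsub hxm) hcs hderiv
      left; rw [hxeq]; exact ⟨hc.1, hc.2⟩
    · -- x (i+1) < x (i-1)
      have hsub1 : Set.Icc (x (i + 1)) (x (i - 1)) ⊆ s := fun y hy =>
        hsub ⟨le_trans hqm.1 hy.1, le_trans hy.2 hpm.2⟩
      obtain ⟨c, hc, hceq⟩ := exists_deriv_eq_slope f h
        (hd.continuousOn.mono hsub1)
        (hd.mono (subset_trans Set.Ioo_subset_Icc_self hsub1))
      have hne' : x (i - 1) - x (i + 1) ≠ 0 := sub_ne_zero.mpr (hne i h1 h2)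
      have hderiv : deriv f (x i) = deriv f c := by
        rw [hceq]; field_simp; linarith [hstati]
      have hcs : c ∈ s := hsub1 (Set.Ioo_subset_Icc_self hc)
      have hxeq : x i = c := hanti.injOn (hsub hxm) hcs hderiv
      right; rw [hxeq]; exact ⟨hc.1, hc.2⟩
  -- monotonicity along the chain
  have C : ∀ i, i ≤ n → x i < x (i + 1) := by
    intro i
    induction i with
    | zero =>
      intro _
      rcases key 1 le_rfl hn1 with ⟨h1, h2⟩ | ⟨h1, h2⟩
      · simpa using h1
      · exfalso
        have : a ≤ x 1 := (hmem 1 (by omega)).1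
        simp only [Nat.sub_self] at h2
        rw [h0] at h2; linarith
    | succ i ih =>
      intro hle
      have hxi : x i < x (i + 1) := ih (by omega)
      have := key (i + 1) (by omega) hle
      simp only [Nat.add_sub_cancel] at this
      rcases this with ⟨h1, h2⟩ | ⟨h1, h2⟩
      · exact h2
      · linarith
  intro i h1 h2
  constructor
  · have := C (i - 1) (by omega)
    rwa [Nat.sub_add_cancel h1] at this
  · exact C i h2
end

section
/- Let f(x) = α x² + β x + γ with α < 0, and let a < b. Suppose a = x₀ ≤ x₁ ≤ ⋯ ≤ x_n ≤ x_{n+1} = b satisfy, for all i = 1,…,n with x_{i-1} < x_{i+1}, the stationarity equations f(x_{i+1}) - f(x_{i-1}) + f'(x_i)(x_{i-1} - x_{i+1}) = 0. Then x_i = a + i·(b-a)/(n+1) for every i = 0, …, n+1, i.e., the knots are equally spaced. -/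
theorem stmt_5 (α β γ a b : ℝ) (hα : α < 0) (hab : a < b) (n : ℕ) (x : ℕ → ℝ)
    (h0 : x 0 = a) (hlast : x (n + 1) = b)
    (hmono : ∀ i ≤ n, x i ≤ x (i + 1))
    (hstat : ∀ i, 1 ≤ i → i ≤ n → x (i - 1) < x (i + 1) →
      (α * (x (i + 1))^2 + β * x (i + 1) + γ) - (α * (x (i - 1))^2 + β * x (i - 1) + γ)
        + (2 * α * x i + β) * (x (i - 1) - x (i + 1)) = 0) :
    ∀ i ≤ n + 1, x i = a + i * (b - a) / (n + 1) := by
  -- midpoint property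
  have hmid : ∀ i, 1 ≤ i → i ≤ n → x (i + 1) + x (i - 1) - 2 * x i = 0 := by
    intro i h1 h2
    obtain ⟨j, rfl⟩ : ∃ j, i = j + 1 := ⟨i - 1, (Nat.succ_pred_eq_of_pos h1).symm⟩
    simp only [Nat.add_sub_cancel] at *
    by_cases hlt : x j < x (j + 1 + 1)
    · have := hstat (j + 1) h1 h2
      simp only [Nat.add_sub_cancel] at this
      have heq := this hlt
      have hfac : α * (x (j + 1 + 1) - x j) * (x (j + 1 + 1) + x j - 2 * x (j + 1)) = 0 := by
        nlinarith [heq]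
      have h1' : α * (x (j + 1 + 1) - x j) ≠ 0 :=
        mul_ne_zero (ne_of_lt hα) (by linarith)
      have := (mul_eq_zero.mp hfac).resolve_left h1'
      linarith
    · have ha1 : x j ≤ x (j + 1) := hmono j (by omega)
      have ha2 : x (j + 1) ≤ x (j + 1 + 1) := hmono (j + 1) h2
      push_neg at hlt
      linarith
  set d : ℝ := x 1 - x 0 with hd
  have hdiff : ∀ i ≤ n, x (i + 1) - x i = d := by
    intro i hi
    induction i with
    | zero => simp [hd]
    | succ k ih =>
      have hm := hmid (k + 1) (by omega) hi
      simp only [Nat.add_sub_cancel] at hm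
      have := ih (by omega)
      linarith
  have hap : ∀ i ≤ n + 1, x i = a + i * d := by
    intro i hi
    induction i with
    | zero => simp [h0]
    | succ k ih =>
      have hk := ih (by omega)
      have := hdiff k (by omega)
      push_cast
      linarith
  have hlastd : a + (n + 1 : ℝ) * d = b := by
    have := hap (n + 1) le_rfl
    rw [hlast] at this
    push_cast at this
    linarith
  have hn1 : (n : ℝ) + 1 ≠ 0 := by positivity
  have hdval : d = (b - a) / (n + 1) := by
    field_simp
    linarith
  intro i hi
  rw [hap i hi, hdval]
  ring
end

section
/- Let T = tridiag(d_i, e_i) be a real symmetric tridiagonal n×n matrix with diagonal entries d_i > 0 and off-diagonal entries e_i. If e_i² < (1/4)·d_i·d_{i+1} / cos²(π/(n+1)) for all i = 1, …, n−1, then T is positive definite. -/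
open Finset Real Matrix


lemma key_ineq (n : ℕ) (hn : 2 ≤ n) (w : ℕ → ℝ) :
    2 * (1 / (2 * Real.cos (Real.pi / (n + 1)))) *
      ∑ i ∈ Finset.range (n - 1), w i * w (i + 1) ≤ ∑ i ∈ Finset.range n, (w i) ^ 2 := by
  set θ : ℝ := Real.pi / (n + 1) with hθ
  set c : ℝ := 1 / (2 * Real.cos θ) with hc
  have hpi := Real.pi_pos
  have hn1 : (0:ℝ) < (n:ℝ) + 1 := by positivity
  have hθpos : 0 < θ := by positivity
  have hθle : θ ≤ Real.pi / 3 := by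
    rw [hθ]
    apply div_le_div_of_nonneg_left hpi.le (by norm_num)
    have : (2:ℝ) ≤ (n:ℝ) := by exact_mod_cast hn
    linarith
  have hcos : 0 < Real.cos θ := by
    apply Real.cos_pos_of_mem_Ioo
    constructor <;> nlinarith
  have hcpos : 0 < c := by rw [hc]; positivity
  set s : ℕ → ℝ := fun j => Real.sin (j * θ) with hs
  have hnθ : ((n:ℝ) + 1) * θ = Real.pi := by
    rw [hθ]; field_simp
  have hspos : ∀ j : ℕ, 1 ≤ j → j ≤ n → 0 < s j := by
    intro j h1 h2
    apply Real.sin_pos_of_pos_of_lt_pi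
    · have : (1:ℝ) ≤ (j:ℝ) := by exact_mod_cast h1
      nlinarith
    · have : (j:ℝ) ≤ (n:ℝ) := by exact_mod_cast h2
      nlinarith
  have hrec : ∀ k : ℕ, s (k + 2) + s k = 2 * Real.cos θ * s (k + 1) := by
    intro k
    simp only [hs]
    push_cast
    rw [show ((k:ℝ) + 2) * θ = ((k:ℝ) + 1) * θ + θ by ring,
        show (k:ℝ) * θ = ((k:ℝ) + 1) * θ - θ by ring,
        Real.sin_add, Real.sin_sub]
    ring
  have hclaim : ∀ k, k < n →
      (1 - c * s k / s (k + 1)) * (w k) ^ 2 ≤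
        ∑ i ∈ Finset.range (k + 1), (w i) ^ 2 -
          2 * c * ∑ i ∈ Finset.range k, w i * w (i + 1) := by
    intro k
    induction k with
    | zero =>
      intro _
      have hs0 : s 0 = 0 := by simp [hs]
      simp [hs0]
    | succ k ih =>
      intro hk1
      have ihk := ih (by omega)
      have hsk1 : 0 < s (k + 1) := hspos (k + 1) (by omega) (by omega)
      have hsk2 : 0 < s (k + 2) := hspos (k + 2) (by omega) (by omega)
      have e1 : s (k + 2) = 2 * Real.cos θ * s (k + 1) - s k := by linarith [hrec k]
      have hp : 1 - c * s k / s (k + 1) = c * s (k + 2) / s (k + 1) := by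
        rw [e1, hc]
        field_simp
      set p : ℝ := c * s (k + 2) / s (k + 1) with hpdef
      have hppos : 0 < p := by positivity
      have hq : c * s (k + 1) / s (k + 2) = c ^ 2 / p := by
        rw [hpdef]
        field_simp
      rw [Finset.sum_range_succ, Finset.sum_range_succ (fun i => w i * w (i + 1)), hq]
      rw [hp] at ihk
      have hcc : c ^ 2 / p * p = c ^ 2 := div_mul_cancel₀ _ (ne_of_gt hppos)
      nlinarith [sq_nonneg (p * w k - c * w (k + 1)), ihk, hppos, hcc]
  have hfin := hclaim (n - 1) (by omega)
  have h1 : n - 1 + 1 = n := by omega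
  rw [h1] at hfin
  have hsθ : 0 < Real.sin θ := Real.sin_pos_of_pos_of_lt_pi hθpos (by nlinarith)
  have hsn : s n = Real.sin θ := by
    simp only [hs]
    rw [show (n:ℝ) * θ = ((n:ℝ) + 1) * θ - θ by ring, hnθ]
    exact Real.sin_pi_sub θ
  have hsn1 : s (n - 1) = Real.sin (2 * θ) := by
    simp only [hs]
    rw [Nat.cast_sub (by omega : 1 ≤ n)]
    rw [show ((n:ℝ) - (1:ℕ)) * θ = ((n:ℝ) + 1) * θ - 2 * θ by push_cast; ring, hnθ]
    exact Real.sin_pi_sub _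
  have hcoef : 1 - c * s (n - 1) / s n = 0 := by
    rw [hsn, hsn1, Real.sin_two_mul, hc]
    field_simp
    ring
  rw [hcoef, zero_mul] at hfin
  linarith


lemma quad (n : ℕ) (d e : ℕ → ℝ) (X : ℕ → ℝ) :
    ∑ i ∈ Finset.range n, ∑ j ∈ Finset.range n,
        X i * ((if i = j then d i else if i + 1 = j ∨ j + 1 = i then e (min i j) else 0) * X j)
      = ∑ i ∈ Finset.range n, d i * X i ^ 2
        + 2 * ∑ i ∈ Finset.range (n - 1), e i * (X i * X (i + 1)) := by
  have hsplit : ∀ i j : ℕ,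
      X i * ((if i = j then d i else if i + 1 = j ∨ j + 1 = i then e (min i j) else 0) * X j)
        = (if j = i then d i * X i ^ 2 else 0)
          + (if j = i + 1 then e i * (X i * X (i + 1)) else 0)
          + (if i = j + 1 then e j * (X j * X (j + 1)) else 0) := by
    intro i j
    by_cases h1 : i = j
    · subst h1
      simp [show ¬ (i = i + 1) by omega, show ¬ (i = i + 1 + 1) by omega]
      ring
    · by_cases h2 : i + 1 = j
      · subst h2
        have hm : min i (i + 1) = i := by omega
        simp [h1, hm, show ¬ (i + 1 = i) by omega, show ¬ (i = i + 1 + 1) by omega]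
        ring
      · by_cases h3 : j + 1 = i
        · subst h3
          have hm : min (j + 1) j = j := by omega
          simp [h1, h2, hm, show ¬ (j = j + 1) by omega, show ¬ (j = j + 1 + 1) by omega]
          ring
        · simp [h1, h2, h3, show ¬ (j = i) by omega, show ¬ (j = i + 1) by omega,
            show ¬ (i = j + 1) by omega]
  have step1 : ∑ i ∈ Finset.range n, ∑ j ∈ Finset.range n,
      X i * ((if i = j then d i else if i + 1 = j ∨ j + 1 = i then e (min i j) else 0) * X j)
      = (∑ i ∈ Finset.range n, (if i ∈ Finset.range n then d i * X i ^ 2 else 0))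
        + (∑ i ∈ Finset.range n, (if i + 1 ∈ Finset.range n then e i * (X i * X (i + 1)) else 0))
        + (∑ j ∈ Finset.range n, (if j + 1 ∈ Finset.range n then e j * (X j * X (j + 1)) else 0)) := by
    rw [Finset.sum_congr rfl (fun i _ => Finset.sum_congr rfl (fun j _ => hsplit i j))]
    simp only [Finset.sum_add_distrib]
    congr 1
    · congr 1
      · exact Finset.sum_congr rfl fun i _ =>
          Finset.sum_ite_eq' (Finset.range n) i (fun _ => d i * X i ^ 2)
      · exact Finset.sum_congr rfl fun i _ =>
          Finset.sum_ite_eq' (Finset.range n) (i + 1) (fun _ => e i * (X i * X (i + 1)))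
    · rw [Finset.sum_comm]
      exact Finset.sum_congr rfl fun j _ =>
        Finset.sum_ite_eq' (Finset.range n) (j + 1) (fun _ => e j * (X j * X (j + 1)))
  rw [step1]
  have h2 : ∀ (f : ℕ → ℝ), (∑ i ∈ Finset.range n, (if i + 1 ∈ Finset.range n then f i else 0))
      = ∑ i ∈ Finset.range (n - 1), f i := by
    intro f
    rw [show (∑ i ∈ Finset.range n, (if i + 1 ∈ Finset.range n then f i else 0))
        = ∑ i ∈ Finset.range (n - 1), (if i + 1 ∈ Finset.range n then f i else 0) from
      (Finset.sum_subset (Finset.range_subset_range.mpr (by omega))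
        (fun x hx hx' => by
          rw [if_neg]
          simp only [Finset.mem_range] at hx hx' ⊢
          omega)).symm]
    exact Finset.sum_congr rfl fun i hi => by
      rw [if_pos]
      simp only [Finset.mem_range] at hi ⊢
      omega
  rw [h2]
  rw [Finset.sum_congr rfl (fun i hi => if_pos hi)]
  ring


theorem stmt_15 (n : ℕ) (d e : ℕ → ℝ)
    (hd : ∀ i < n, 0 < d i)
    (he : ∀ i, i + 1 < n →
      (e i)^2 < (1/4) * d i * d (i + 1) / (Real.cos (Real.pi / (n + 1)))^2) :
    (Matrix.of fun i j : Fin n =>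
      if (i : ℕ) = (j : ℕ) then d i
      else if (i : ℕ) + 1 = (j : ℕ) ∨ (j : ℕ) + 1 = (i : ℕ) then e (min (i : ℕ) (j : ℕ))
      else 0).PosDef := by
  rw [Matrix.posDef_iff_dotProduct_mulVec]
  constructor
  · -- Hermitian
    ext i j
    simp only [Matrix.conjTranspose_apply, Matrix.of_apply, star_trivial]
    by_cases h1 : (i : ℕ) = (j : ℕ)
    · simp [h1]
    · rw [if_neg (fun h => h1 h.symm), if_neg h1]
      by_cases h2 : (i : ℕ) + 1 = (j : ℕ) ∨ (j : ℕ) + 1 = (i : ℕ)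
      · rw [if_pos (Or.symm h2), if_pos h2]
        exact congrArg e (Nat.min_comm _ _)
      · rw [if_neg (fun h => h2 (Or.symm h)), if_neg h2]
  · intro x hx
    have hstar : star x = x := by ext i; simp
    rw [hstar]
    set X : ℕ → ℝ := fun i => if h : i < n then x ⟨i, h⟩ else 0 with hXdef
    have hX : ∀ i : Fin n, X (i : ℕ) = x i := by
      intro i
      simp only [hXdef]
      rw [dif_pos i.2]
    have hconv : ∀ g : ℕ → ℕ → ℝ,
        (∑ i : Fin n, ∑ j : Fin n, g (i : ℕ) (j : ℕ))
          = ∑ i ∈ Finset.range n, ∑ j ∈ Finset.range n, g i j := by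
      intro g
      calc ∑ i : Fin n, ∑ j : Fin n, g (i : ℕ) (j : ℕ)
          = ∑ i : Fin n, ∑ j ∈ Finset.range n, g (i : ℕ) j :=
            Finset.sum_congr rfl fun i _ => Fin.sum_univ_eq_sum_range (g (i : ℕ)) n
        _ = ∑ i ∈ Finset.range n, ∑ j ∈ Finset.range n, g i j :=
            Fin.sum_univ_eq_sum_range (fun i => ∑ j ∈ Finset.range n, g i j) n
    have hQ : x ⬝ᵥ ((Matrix.of fun i j : Fin n =>
        if (i : ℕ) = (j : ℕ) then d i
        else if (i : ℕ) + 1 = (j : ℕ) ∨ (j : ℕ) + 1 = (i : ℕ) then e (min (i : ℕ) (j : ℕ))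
        else 0) *ᵥ x)
        = ∑ i ∈ Finset.range n, ∑ j ∈ Finset.range n,
            X i * ((if i = j then d i else if i + 1 = j ∨ j + 1 = i then e (min i j) else 0) * X j) := by
      rw [← hconv]
      simp only [dotProduct, Matrix.mulVec, Matrix.of_apply, Finset.mul_sum]
      exact Finset.sum_congr rfl fun i _ => Finset.sum_congr rfl fun j _ => by
        rw [hX i, hX j]
    rw [hQ, quad n d e X]
    obtain ⟨j0, hj0, hXj0⟩ : ∃ j, j < n ∧ X j ≠ 0 := by
      obtain ⟨i, hi⟩ := Function.ne_iff.mp hx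
      exact ⟨(i : ℕ), i.2, by rw [hX i]; simpa using hi⟩
    by_cases hz : ∀ i ∈ Finset.range (n - 1), X i * X (i + 1) = 0
    · have h0 : ∑ i ∈ Finset.range (n - 1), e i * (X i * X (i + 1)) = 0 :=
        Finset.sum_eq_zero fun i hi => by rw [hz i hi, mul_zero]
      rw [h0, mul_zero, add_zero]
      apply Finset.sum_pos'
        (fun i hi => mul_nonneg (hd i (Finset.mem_range.mp hi)).le (sq_nonneg _))
      exact ⟨j0, Finset.mem_range.mpr hj0,
        mul_pos (hd j0 hj0) (lt_of_le_of_ne (sq_nonneg _) (Ne.symm (pow_ne_zero 2 hXj0)))⟩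
    · push_neg at hz
      obtain ⟨i0, hi0, hz0⟩ := hz
      have hi0' : i0 + 1 < n := by
        have := Finset.mem_range.mp hi0; omega
      have hn2 : 2 ≤ n := by
        have := Finset.mem_range.mp hi0; omega
      set θ : ℝ := Real.pi / (n + 1) with hθ
      have hpi := Real.pi_pos
      have hθpos : 0 < θ := by positivity
      have hθle : θ ≤ Real.pi / 3 := by
        rw [hθ]
        apply div_le_div_of_nonneg_left hpi.le (by norm_num)
        have : (2 : ℝ) ≤ (n : ℝ) := by exact_mod_cast hn2
        linarith
      have hcos : 0 < Real.cos θ := by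
        apply Real.cos_pos_of_mem_Ioo
        constructor <;> nlinarith
      set c : ℝ := 1 / (2 * Real.cos θ) with hc
      have hcpos : 0 < c := by rw [hc]; positivity
      set w : ℕ → ℝ := fun i => Real.sqrt (d i) * |X i| with hw
      have hkey := key_ineq n hn2 w
      have hdw : ∑ i ∈ Finset.range n, d i * X i ^ 2 = ∑ i ∈ Finset.range n, (w i) ^ 2 := by
        refine Finset.sum_congr rfl fun i hi => ?_
        simp only [hw]
        rw [mul_pow, Real.sq_sqrt (hd i (Finset.mem_range.mp hi)).le, sq_abs]
      have hB : ∀ i, i + 1 < n → |e i| < c * (Real.sqrt (d i) * Real.sqrt (d (i + 1))) := by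
        intro i hi
        have h1 := he i hi
        have hdi := hd i (by omega)
        have hdi1 := hd (i + 1) hi
        have hposB : 0 < c * (Real.sqrt (d i) * Real.sqrt (d (i + 1))) := by
          have h2 : 0 < Real.sqrt (d i) := Real.sqrt_pos.mpr hdi
          have h3 : 0 < Real.sqrt (d (i + 1)) := Real.sqrt_pos.mpr hdi1
          positivity
        have hsq : (c * (Real.sqrt (d i) * Real.sqrt (d (i + 1)))) ^ 2
            = 1 / 4 * d i * d (i + 1) / (Real.cos θ) ^ 2 := by
          rw [mul_pow, mul_pow, Real.sq_sqrt hdi.le, Real.sq_sqrt hdi1.le, hc]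
          field_simp
          ring
        nlinarith [abs_nonneg (e i), sq_abs (e i), hposB, hsq, h1]
      have habs : ∀ i, i + 1 < n →
          |e i * (X i * X (i + 1))| ≤ c * (w i * w (i + 1)) := by
        intro i hi
        have hBi := hB i hi
        simp only [hw]
        rw [abs_mul, abs_mul]
        have h1 : (0 : ℝ) ≤ |X i| * |X (i + 1)| := by positivity
        calc |e i| * (|X i| * |X (i + 1)|)
            ≤ (c * (Real.sqrt (d i) * Real.sqrt (d (i + 1)))) * (|X i| * |X (i + 1)|) :=
              mul_le_mul_of_nonneg_right hBi.le h1
          _ = c * ((Real.sqrt (d i) * |X i|) * (Real.sqrt (d (i + 1)) * |X (i + 1)|)) := by ring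
      have hterm : ∀ i ∈ Finset.range (n - 1),
          -(c * (w i * w (i + 1))) ≤ e i * (X i * X (i + 1)) := by
        intro i hi
        have hi' : i + 1 < n := by have := Finset.mem_range.mp hi; omega
        linarith [neg_abs_le (e i * (X i * X (i + 1))), habs i hi']
      have hstrict : -(c * (w i0 * w (i0 + 1))) < e i0 * (X i0 * X (i0 + 1)) := by
        have hBi := hB i0 hi0'
        have hpos : (0 : ℝ) < |X i0| * |X (i0 + 1)| := by
          rw [← abs_mul]
          exact abs_pos.mpr hz0
        have h2 : |e i0 * (X i0 * X (i0 + 1))| < c * (w i0 * w (i0 + 1)) := by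
          simp only [hw]
          rw [abs_mul, abs_mul]
          calc |e i0| * (|X i0| * |X (i0 + 1)|)
              < (c * (Real.sqrt (d i0) * Real.sqrt (d (i0 + 1)))) * (|X i0| * |X (i0 + 1)|) :=
                mul_lt_mul_of_pos_right hBi hpos
            _ = c * ((Real.sqrt (d i0) * |X i0|) * (Real.sqrt (d (i0 + 1)) * |X (i0 + 1)|)) := by
                ring
        linarith [neg_abs_le (e i0 * (X i0 * X (i0 + 1)))]
      have hsum := Finset.sum_lt_sum hterm ⟨i0, hi0, hstrict⟩
      have hneg : ∑ i ∈ Finset.range (n - 1), -(c * (w i * w (i + 1)))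
          = -(c * ∑ i ∈ Finset.range (n - 1), w i * w (i + 1)) := by
        rw [Finset.mul_sum, ← Finset.sum_neg_distrib]
      rw [hneg] at hsum
      rw [hdw]
      linarith [hkey, hsum]
end
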